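/- Let M₁ and M₂ be two disjoint separators in an open annulus A. Then either M₁ ⊆ A_L(M₂) or M₁ ⊆ A_R(M₂), where A_L(M₂) and A_R(M₂) are the two annular components of A − M₂ containing the left and right ends respectively. Moreover, M₁ ⊆ A_L(M₂) implies M₂ ⊆ A_R(M₁). -/

import Mathlib

/- Model of the open annulus A = S¹ × (0,1), with universal cover ℝ × (0,1). -/

noncomputable section
open Set Filter Topology MeasureTheory

/-- The open interval (0,1) as a type. -/
abbrev IooT : Type := ↥(Set.Ioo (0:ℝ) 1)

/-- The open annulus `A = S¹ × (0,1)`. -/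
abbrev Ann : Type := AddCircle (1:ℝ) × IooT

/-- The universal cover `Ã = ℝ × (0,1)` of the open annulus. -/
abbrev Cov : Type := ℝ × IooT

/-- The covering projection `Ã → A`. -/
def proj : Cov → Ann := fun z => ((z.1 : AddCircle (1:ℝ)), z.2)

/-- An arc (curve) in `A` connecting the left end (y → 0) to the right end (y → 1). -/
def ConnectsEnds (γ : ℝ → Ann) : Prop :=
  Continuous γ ∧ Filter.Tendsto (fun t => ((γ t).2 : ℝ)) Filter.atBot (nhds 0) ∧
    Filter.Tendsto (fun t => ((γ t).2 : ℝ)) Filter.atTop (nhds 1)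

/-- A subset of the annulus is separating (essential) if every arc connecting
the two ends of `A` meets it. -/
def Separating (M : Set Ann) : Prop := ∀ γ : ℝ → Ann, ConnectsEnds γ → ∃ t, γ t ∈ M

/-- A separator: a compact, connected, separating subset of the annulus. -/
def IsSeparator (M : Set Ann) : Prop := IsCompact M ∧ IsConnected M ∧ Separating M

/-- A set contains the left end of the annulus. -/
def ContainsLeftEnd (U : Set Ann) : Prop := ∃ ε > (0:ℝ), ∀ p : Ann, ((p.2 : ℝ) < ε) → p ∈ U

/-- A set contains the right end of the annulus. -/
def ContainsRightEnd (U : Set Ann) : Prop := ∃ ε > (0:ℝ), ∀ p : Ann, (1 - ε < (p.2 : ℝ)) → p ∈ U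

/-- `U` is a connected component of the complement of `M`. -/
def IsComponentOfCompl (M U : Set Ann) : Prop := ∃ p, p ∉ M ∧ U = connectedComponentIn Mᶜ p

/-- `U` is the component of `A − M` containing the left end (`A_L(M)`). -/
def IsLeftComponent (M U : Set Ann) : Prop := IsComponentOfCompl M U ∧ ContainsLeftEnd U

/-- `U` is the component of `A − M` containing the right end (`A_R(M)`). -/
def IsRightComponent (M U : Set Ann) : Prop := IsComponentOfCompl M U ∧ ContainsRightEnd U

-- ===== auxiliary development =====

-- instances
instance : LocallyPathConnectedSpace (AddCircle (1:ℝ)) :=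
  QuotientAddGroup.isOpenQuotientMap_mk.isQuotientMap.locPathConnectedSpace

theorem isPathConnected_prod' {X Y : Type*} [TopologicalSpace X] [TopologicalSpace Y]
    {s : Set X} {t : Set Y} (hs : IsPathConnected s) (ht : IsPathConnected t) :
    IsPathConnected (s ×ˢ t) := by
  obtain ⟨a, ha, hsa⟩ := hs
  obtain ⟨b, hb, htb⟩ := ht
  refine ⟨(a, b), ⟨ha, hb⟩, ?_⟩
  rintro ⟨z₁, z₂⟩ ⟨hz₁, hz₂⟩
  obtain ⟨P, hP⟩ := hsa hz₁
  obtain ⟨Q, hQ⟩ := htb hz₂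
  exact ⟨P.prod Q, fun τ => ⟨hP τ, hQ τ⟩⟩

instance Prod.locPathConnectedSpace' {X Y : Type*} [TopologicalSpace X] [TopologicalSpace Y]
    [LocallyPathConnectedSpace X] [LocallyPathConnectedSpace Y] : LocallyPathConnectedSpace (X × Y) := by
  refine LocallyPathConnectedSpace.of_bases
    (fun z : X × Y => ((nhds_prod_eq (x := z.1) (y := z.2)) ▸
      (isOpen_isPathConnected_basis z.1).prod (isOpen_isPathConnected_basis z.2)))
    fun z i hi => ?_
  exact isPathConnected_prod' hi.1.2.2 hi.2.2.2

instance : LocallyPathConnectedSpace IooT := isOpen_Ioo.locPathConnectedSpace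

-- the logistic function
def sig (u : ℝ) : ℝ := (1 + Real.exp (-u))⁻¹

lemma sig_pos (u : ℝ) : 0 < sig u := by
  have := Real.exp_pos (-u); unfold sig; positivity

lemma sig_lt_one (u : ℝ) : sig u < 1 := by
  have h := Real.exp_pos (-u)
  rw [sig, inv_lt_one_iff₀]
  right; linarith

lemma sig_strictMono : StrictMono sig := by
  intro u v huv
  have h1 : 0 < 1 + Real.exp (-v) := by positivity
  have h2 : 1 + Real.exp (-v) < 1 + Real.exp (-u) := by
    have := Real.exp_lt_exp.mpr (neg_lt_neg huv); linarith
  exact inv_strictAnti₀ h1 h2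

lemma sig_continuous : Continuous sig := by
  refine (continuous_const.add (Real.continuous_exp.comp continuous_neg)).inv₀ ?_
  intro u; have := Real.exp_pos (-u); exact (by positivity : (0:ℝ) < 1 + Real.exp (-u)).ne'

lemma sig_tendsto_atBot : Tendsto sig atBot (nhds 0) := by
  refine Filter.Tendsto.inv_tendsto_atTop ?_
  have h : Tendsto (fun u : ℝ => Real.exp (-u)) atBot atTop :=
    Real.tendsto_exp_atTop.comp tendsto_neg_atBot_atTop
  exact tendsto_atTop_add_const_left _ 1 h

lemma sig_tendsto_atTop : Tendsto sig atTop (nhds 1) := by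
  have h : Tendsto (fun u : ℝ => 1 + Real.exp (-u)) atTop (nhds 1) := by
    have h2 : Tendsto (fun u : ℝ => Real.exp (-u)) atTop (nhds 0) :=
      Real.tendsto_exp_atBot.comp tendsto_neg_atTop_atBot
    simpa using tendsto_const_nhds.add h2
  have := h.inv₀ one_ne_zero; simp only [inv_one] at this; exact this

-- the vertical curve
def gamv : ℝ → Ann := fun u => (((0:ℝ) : AddCircle (1:ℝ)), ⟨sig u, sig_pos u, sig_lt_one u⟩)

lemma gamv_snd (u : ℝ) : (((gamv u).2 : ℝ)) = sig u := rfl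

lemma continuous_gamv : Continuous gamv :=
  continuous_const.prodMk (sig_continuous.subtype_mk _)

lemma connectsEnds_gamv : ConnectsEnds gamv :=
  ⟨continuous_gamv, sig_tendsto_atBot, sig_tendsto_atTop⟩

def yc : Ann → ℝ := fun p => (p.2 : ℝ)
lemma continuous_yc : Continuous yc := continuous_subtype_val.comp continuous_snd


lemma connectsEnds_glue {s t : ℝ} (hst : s ≤ t) {mid : ℝ → Ann} (hm : Continuous mid)
    (hms : mid s = gamv s) (hmt : mid t = gamv t) :
    ConnectsEnds (fun u => if u ≤ s then gamv u else if u ≤ t then mid u else gamv u) := by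
  have hinner : Continuous (fun u => if u ≤ t then mid u else gamv u) :=
    Continuous.if_le hm continuous_gamv continuous_id continuous_const
      (fun x hx => by rw [hx, hmt])
  have hcont : Continuous (fun u => if u ≤ s then gamv u else if u ≤ t then mid u else gamv u) :=
    Continuous.if_le continuous_gamv hinner continuous_id continuous_const
      (fun x hx => by simp only [hx, if_pos hst, hms])
  refine ⟨hcont, ?_, ?_⟩
  · refine Filter.Tendsto.congr' ?_ sig_tendsto_atBot
    filter_upwards [eventually_le_atBot s] with u hu
    simp only [if_pos hu, gamv_snd]
  · refine Filter.Tendsto.congr' ?_ sig_tendsto_atTop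
    filter_upwards [eventually_gt_atTop t] with u hu
    have h1 : ¬ u ≤ s := not_le.mpr (lt_of_le_of_lt hst hu)
    have h2 : ¬ u ≤ t := not_le.mpr hu
    simp only [if_neg h1, if_neg h2, gamv_snd]

lemma path_glue_avoid {M V : Set Ann} (hVM : Disjoint V M) {u₀ u₁ : ℝ} (h01 : u₀ < u₁)
    (hJ : JoinedIn V (gamv u₀) (gamv u₁))
    (h1 : ∀ u ≤ u₀, gamv u ∉ M) (h3 : ∀ u, u₁ < u → gamv u ∉ M)
    (hsep : Separating M) : False := by
  set P := hJ.somePath with hP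
  have hd : u₁ - u₀ ≠ 0 := sub_ne_zero.mpr (ne_of_gt h01)
  set mid : ℝ → Ann := fun u => P.extend ((u - u₀) / (u₁ - u₀)) with hmid
  have hmc : Continuous mid :=
    P.continuous_extend.comp ((continuous_id.sub continuous_const).div_const _)
  have hm0 : mid u₀ = gamv u₀ := by
    simp only [hmid, sub_self, zero_div, Path.extend_zero]
  have hm1 : mid u₁ = gamv u₁ := by
    simp only [hmid, div_self hd, Path.extend_one]
  have hce := connectsEnds_glue (le_of_lt h01) hmc hm0 hm1
  obtain ⟨τ, hτ⟩ := hsep _ hce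
  by_cases hτ0 : τ ≤ u₀
  · rw [if_pos hτ0] at hτ; exact h1 τ hτ0 hτ
  by_cases hτ1 : τ ≤ u₁
  · rw [if_neg hτ0, if_pos hτ1] at hτ
    have hmem : mid τ ∈ V := hJ.somePath_mem _
    exact Set.disjoint_left.mp hVM hmem hτ
  · rw [if_neg hτ0, if_neg hτ1] at hτ; exact h3 τ (lt_of_not_ge hτ1) hτ


lemma isPreconnected_low {a : ℝ} (ha1 : a ≤ 1) : IsPreconnected {p : Ann | yc p < a} := by
  have h1 : {p : Ann | yc p < a}
      = (Set.univ : Set (AddCircle (1:ℝ))) ×ˢ {y : IooT | (y : ℝ) < a} := by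
    ext p; simp [yc, Set.mem_prod]
  rw [h1]
  refine IsPreconnected.prod isPreconnected_univ ?_
  have h2 : Subtype.val '' {y : IooT | (y : ℝ) < a} = Set.Ioo 0 a := by
    ext r; constructor
    · rintro ⟨⟨r', hr'⟩, hlt, rfl⟩; exact ⟨hr'.1, hlt⟩
    · rintro ⟨h0, hA⟩; exact ⟨⟨r, h0, lt_of_lt_of_le hA ha1⟩, hA, rfl⟩
  refine Topology.IsInducing.subtypeVal.isPreconnected_image.mp ?_
  rw [h2]; exact isPreconnected_Ioo

lemma isPreconnected_high {b : ℝ} (hb0 : 0 ≤ b) : IsPreconnected {p : Ann | b < yc p} := by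
  have h1 : {p : Ann | b < yc p}
      = (Set.univ : Set (AddCircle (1:ℝ))) ×ˢ {y : IooT | b < (y : ℝ)} := by
    ext p; simp [yc, Set.mem_prod]
  rw [h1]
  refine IsPreconnected.prod isPreconnected_univ ?_
  have h2 : Subtype.val '' {y : IooT | b < (y : ℝ)} = Set.Ioo b 1 := by
    ext r; constructor
    · rintro ⟨⟨r', hr'⟩, hlt, rfl⟩; exact ⟨hlt, hr'.2⟩
    · rintro ⟨h0, hA⟩; exact ⟨⟨r, lt_of_le_of_lt hb0 h0, hA⟩, h0, rfl⟩
  refine Topology.IsInducing.subtypeVal.isPreconnected_image.mp ?_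
  rw [h2]; exact isPreconnected_Ioo

lemma low_subset_left {M L : Set Ann} (hL : IsLeftComponent M L) {a : ℝ}
    (ha0 : 0 < a) (ha1 : a ≤ 1) (haM : ∀ p ∈ M, a ≤ yc p) :
    {p : Ann | yc p < a} ⊆ L := by
  obtain ⟨⟨p, hp, hLe⟩, ε, hε, hεL⟩ := hL
  have hmin : 0 < min a ε := lt_min ha0 hε
  set c : ℝ := min a ε / 2 with hc
  have hc0 : 0 < c := by positivity
  have hca : c < a := lt_of_lt_of_le (by linarith [half_lt_self hmin]) (min_le_left a ε)
  have hcε : c < ε := lt_of_lt_of_le (by linarith [half_lt_self hmin]) (min_le_right a ε)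
  have hc1 : c < 1 := lt_of_lt_of_le hca ha1
  set q : Ann := (((0:ℝ) : AddCircle (1:ℝ)), ⟨c, hc0, hc1⟩) with hq
  have hqL : q ∈ L := hεL q hcε
  have hqS : q ∈ {p : Ann | yc p < a} := hca
  have hsub : {p : Ann | yc p < a} ⊆ Mᶜ := fun x hx hxM => absurd (haM x hxM) (not_le.mpr hx)
  have h1 := (isPreconnected_low ha1).subset_connectedComponentIn hqS hsub
  have h2 : connectedComponentIn Mᶜ p = connectedComponentIn Mᶜ q :=
    connectedComponentIn_eq (show q ∈ connectedComponentIn Mᶜ p from hLe ▸ hqL)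
  rw [hLe, h2]; exact h1

lemma high_subset_right {M R : Set Ann} (hR : IsRightComponent M R) {b : ℝ}
    (hb0 : 0 ≤ b) (hb1 : b < 1) (hbM : ∀ p ∈ M, yc p ≤ b) :
    {p : Ann | b < yc p} ⊆ R := by
  obtain ⟨⟨p, hp, hRe⟩, ε, hε, hεR⟩ := hR
  set c : ℝ := (max b (1 - ε) + 1) / 2 with hc
  have hmax1 : max b (1 - ε) < 1 := max_lt hb1 (by linarith)
  have hcb : b < c := by
    have := le_max_left b (1 - ε); simp only [hc]; linarith
  have hcε : 1 - ε < c := by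
    have := le_max_right b (1 - ε); simp only [hc]; linarith
  have hc1 : c < 1 := by simp only [hc]; linarith
  have hc0 : 0 < c := lt_of_le_of_lt hb0 hcb
  set q : Ann := (((0:ℝ) : AddCircle (1:ℝ)), ⟨c, hc0, hc1⟩) with hq
  have hqR : q ∈ R := hεR q hcε
  have hqS : q ∈ {p : Ann | b < yc p} := hcb
  have hsub : {p : Ann | b < yc p} ⊆ Mᶜ := fun x hx hxM => absurd (hbM x hxM) (not_le.mpr hx)
  have h1 := (isPreconnected_high hb0).subset_connectedComponentIn hqS hsub
  have h2 : connectedComponentIn Mᶜ p = connectedComponentIn Mᶜ q :=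
    connectedComponentIn_eq (show q ∈ connectedComponentIn Mᶜ p from hRe ▸ hqR)
  rw [hRe, h2]; exact h1


lemma left_right_disjoint {M L R : Set Ann} (hM : IsSeparator M)
    (hL : IsLeftComponent M L) (hR : IsRightComponent M R) : Disjoint L R := by
  rw [Set.disjoint_left]; intro x hxL hxR
  obtain ⟨hMc, hMconn, hMsep⟩ := hM
  obtain ⟨⟨p, hp, hLe⟩, ε, hε, hεL⟩ := hL
  obtain ⟨⟨q, hq, hRe⟩, ε', hε', hεR⟩ := hR
  have hLR : L = R := by
    have e1 : connectedComponentIn Mᶜ p = connectedComponentIn Mᶜ x :=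
      connectedComponentIn_eq (show x ∈ connectedComponentIn Mᶜ p from hLe ▸ hxL)
    have e2 : connectedComponentIn Mᶜ q = connectedComponentIn Mᶜ x :=
      connectedComponentIn_eq (show x ∈ connectedComponentIn Mᶜ q from hRe ▸ hxR)
    rw [hLe, hRe, e1, e2]
  have hLopen : IsOpen L := by
    rw [hLe]; exact hMc.isClosed.isOpen_compl.connectedComponentIn
  have hLconn : IsConnected L := by
    rw [hLe]
    exact ⟨⟨p, mem_connectedComponentIn hp⟩, isPreconnected_connectedComponentIn⟩
  have hLpc : IsPathConnected L := hLopen.isConnected_iff_isPathConnected.mp hLconn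
  have hLM : Disjoint L M := by
    rw [hLe, Set.disjoint_left]
    exact fun z hz => connectedComponentIn_subset _ _ hz
  obtain ⟨u₁, hu₁⟩ := (sig_tendsto_atTop.eventually_const_lt (by linarith : (1:ℝ) - ε' < 1)).exists
  obtain ⟨u₀', hu₀'⟩ := (sig_tendsto_atBot.eventually_lt_const hε).exists
  set u₀ : ℝ := min u₀' (u₁ - 1) with hu₀def
  have h01 : u₀ < u₁ := lt_of_le_of_lt (min_le_right _ _) (by linarith)
  have hu₀ : sig u₀ < ε := lt_of_le_of_lt (sig_strictMono.monotone (min_le_left _ _)) hu₀'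
  have hg0 : gamv u₀ ∈ L := hεL _ hu₀
  have hg1 : gamv u₁ ∈ L := hLR ▸ hεR _ hu₁
  have hJ : JoinedIn L (gamv u₀) (gamv u₁) := hLpc.joinedIn _ hg0 _ hg1
  refine path_glue_avoid hLM h01 hJ ?_ ?_ hMsep
  · intro u hu
    have : sig u < ε := lt_of_le_of_lt (sig_strictMono.monotone hu) hu₀
    exact fun hmem => Set.disjoint_left.mp hLM (hεL _ this) hmem
  · intro u hu
    have : 1 - ε' < sig u := lt_trans hu₁ (sig_strictMono hu)
    exact fun hmem => Set.disjoint_left.mp hLM (hLR ▸ hεR _ this) hmem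

lemma mem_ccIn_of_mem_closure {F : Set Ann} (hF : IsOpen F) {x y : Ann}
    (hyF : y ∈ F) (hy : y ∈ closure (connectedComponentIn F x)) :
    y ∈ connectedComponentIn F x := by
  have hV : IsOpen (connectedComponentIn F y) := hF.connectedComponentIn
  have hyV : y ∈ connectedComponentIn F y := mem_connectedComponentIn hyF
  obtain ⟨z, hz1, hz2⟩ := mem_closure_iff.mp hy _ hV hyV
  have h1 : connectedComponentIn F y = connectedComponentIn F z := connectedComponentIn_eq hz1
  have h2 : connectedComponentIn F x = connectedComponentIn F z := connectedComponentIn_eq hz2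
  rw [h2, ← h1]; exact hyV

lemma sSup_exit {F : Set Ann} (hF : IsOpen F) (x : Ann)
    (hne : {u : ℝ | gamv u ∈ closure (connectedComponentIn F x)}.Nonempty)
    (hbdd : BddAbove {u : ℝ | gamv u ∈ closure (connectedComponentIn F x)}) :
    gamv (sSup {u : ℝ | gamv u ∈ closure (connectedComponentIn F x)})
        ∈ closure (connectedComponentIn F x) ∧
    gamv (sSup {u : ℝ | gamv u ∈ closure (connectedComponentIn F x)}) ∉ F := by
  set D := {u : ℝ | gamv u ∈ closure (connectedComponentIn F x)} with hD
  have hDc : IsClosed D := isClosed_closure.preimage continuous_gamv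
  have htD : sSup D ∈ D := hDc.csSup_mem hne hbdd
  refine ⟨htD, fun hyF => ?_⟩
  have hmem : gamv (sSup D) ∈ connectedComponentIn F x :=
    mem_ccIn_of_mem_closure hF hyF htD
  have hO : IsOpen (gamv ⁻¹' connectedComponentIn F x) :=
    hF.connectedComponentIn.preimage continuous_gamv
  obtain ⟨η, hη, hball⟩ := Metric.isOpen_iff.mp hO _ hmem
  have hmem2 : sSup D + η / 2 ∈ D := by
    have : sSup D + η / 2 ∈ gamv ⁻¹' connectedComponentIn F x := by
      apply hball
      rw [Metric.mem_ball, Real.dist_eq]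
      rw [show sSup D + η / 2 - sSup D = η / 2 by ring, abs_of_pos (by linarith)]
      linarith
    exact subset_closure this
  have := le_csSup hbdd hmem2
  linarith

lemma sInf_entry {F : Set Ann} (hF : IsOpen F) (x : Ann)
    (hne : {u : ℝ | gamv u ∈ closure (connectedComponentIn F x)}.Nonempty)
    (hbdd : BddBelow {u : ℝ | gamv u ∈ closure (connectedComponentIn F x)}) :
    gamv (sInf {u : ℝ | gamv u ∈ closure (connectedComponentIn F x)})
        ∈ closure (connectedComponentIn F x) ∧
    gamv (sInf {u : ℝ | gamv u ∈ closure (connectedComponentIn F x)}) ∉ F := by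
  set D := {u : ℝ | gamv u ∈ closure (connectedComponentIn F x)} with hD
  have hDc : IsClosed D := isClosed_closure.preimage continuous_gamv
  have htD : sInf D ∈ D := hDc.csInf_mem hne hbdd
  refine ⟨htD, fun hyF => ?_⟩
  have hmem : gamv (sInf D) ∈ connectedComponentIn F x :=
    mem_ccIn_of_mem_closure hF hyF htD
  have hO : IsOpen (gamv ⁻¹' connectedComponentIn F x) :=
    hF.connectedComponentIn.preimage continuous_gamv
  obtain ⟨η, hη, hball⟩ := Metric.isOpen_iff.mp hO _ hmem
  have hmem2 : sInf D - η / 2 ∈ D := by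
    have : sInf D - η / 2 ∈ gamv ⁻¹' connectedComponentIn F x := by
      apply hball
      rw [Metric.mem_ball, Real.dist_eq]
      rw [show sInf D - η / 2 - sInf D = -(η / 2) by ring, abs_neg, abs_of_pos (by linarith)]
      linarith
    exact subset_closure this
  have := csInf_le hbdd hmem2
  linarith


lemma subset_left_or_right (M₁ M₂ L₂ R₂ : Set Ann) (h₁ : IsSeparator M₁) (h₂ : IsSeparator M₂)
    (hdisj : Disjoint M₁ M₂) (hL₂ : IsLeftComponent M₂ L₂) (hR₂ : IsRightComponent M₂ R₂) :
    M₁ ⊆ L₂ ∨ M₁ ⊆ R₂ := by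
  obtain ⟨hM₁c, hM₁conn, hM₁sep⟩ := h₁
  obtain ⟨hM₂c, hM₂conn, hM₂sep⟩ := h₂
  have hM₂ne : M₂.Nonempty := by
    obtain ⟨τ, hτ⟩ := hM₂sep gamv connectsEnds_gamv; exact ⟨_, hτ⟩
  obtain ⟨pmin, hpminM, hmin⟩ := hM₂c.exists_isMinOn hM₂ne continuous_yc.continuousOn
  obtain ⟨pmax, hpmaxM, hmax⟩ := hM₂c.exists_isMaxOn hM₂ne continuous_yc.continuousOn
  set a₂ : ℝ := yc pmin with ha₂def
  set b₂ : ℝ := yc pmax with hb₂def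
  have ha₂0 : 0 < a₂ := pmin.2.2.1
  have ha₂1 : a₂ < 1 := pmin.2.2.2
  have hb₂0 : 0 < b₂ := pmax.2.2.1
  have hb₂1 : b₂ < 1 := pmax.2.2.2
  have hlow : {p : Ann | yc p < a₂} ⊆ L₂ :=
    low_subset_left hL₂ ha₂0 (le_of_lt ha₂1) (fun p hp => hmin hp)
  have hhigh : {p : Ann | b₂ < yc p} ⊆ R₂ :=
    high_subset_right hR₂ (le_of_lt hb₂0) hb₂1 (fun p hp => hmax hp)
  obtain ⟨τ₁, hτ₁⟩ := hM₁sep gamv connectsEnds_gamv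
  have hm₁c : gamv τ₁ ∈ M₂ᶜ := fun h => Set.disjoint_left.mp hdisj hτ₁ h
  set U := connectedComponentIn M₂ᶜ (gamv τ₁) with hU
  have hM₁U : M₁ ⊆ U :=
    hM₁conn.isPreconnected.subset_connectedComponentIn hτ₁
      (fun x hx h => Set.disjoint_left.mp hdisj hx h)
  obtain ⟨⟨p₂, hp₂, hL₂e⟩, hLend⟩ := hL₂
  obtain ⟨⟨q₂, hq₂, hR₂e⟩, hRend⟩ := hR₂
  by_cases hUL : (U ∩ L₂).Nonempty
  · left
    obtain ⟨x, hxU, hxL⟩ := hUL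
    have e1 : U = connectedComponentIn M₂ᶜ x := connectedComponentIn_eq hxU
    have e2 : connectedComponentIn M₂ᶜ p₂ = connectedComponentIn M₂ᶜ x :=
      connectedComponentIn_eq (show x ∈ connectedComponentIn M₂ᶜ p₂ from hL₂e ▸ hxL)
    have : U = L₂ := by rw [e1, hL₂e, e2]
    exact this ▸ hM₁U
  by_cases hUR : (U ∩ R₂).Nonempty
  · right
    obtain ⟨x, hxU, hxR⟩ := hUR
    have e1 : U = connectedComponentIn M₂ᶜ x := connectedComponentIn_eq hxU
    have e2 : connectedComponentIn M₂ᶜ q₂ = connectedComponentIn M₂ᶜ x :=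
      connectedComponentIn_eq (show x ∈ connectedComponentIn M₂ᶜ q₂ from hR₂e ▸ hxR)
    have : U = R₂ := by rw [e1, hR₂e, e2]
    exact this ▸ hM₁U
  exfalso
  -- U is contained in the band a₂ ≤ y ≤ b₂
  have hband : U ⊆ {p : Ann | a₂ ≤ yc p ∧ yc p ≤ b₂} := by
    intro x hx
    constructor
    · by_contra h
      exact hUL ⟨x, hx, hlow (not_le.mp h)⟩
    · by_contra h
      exact hUR ⟨x, hx, hhigh (not_le.mp h)⟩
  have hbandclosed : IsClosed {p : Ann | a₂ ≤ yc p ∧ yc p ≤ b₂} := by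
    rw [Set.setOf_and]
    exact (isClosed_le continuous_const continuous_yc).inter
      (isClosed_le continuous_yc continuous_const)
  have hclband : closure U ⊆ {p : Ann | a₂ ≤ yc p ∧ yc p ≤ b₂} :=
    closure_minimal hband hbandclosed
  set D := {u : ℝ | gamv u ∈ closure U} with hD
  have hDne : D.Nonempty := ⟨τ₁, subset_closure (hM₁U hτ₁)⟩
  obtain ⟨T₁, hT₁⟩ := (sig_tendsto_atBot.eventually_lt_const ha₂0).exists
  obtain ⟨T₂, hT₂⟩ := (sig_tendsto_atTop.eventually_const_lt hb₂1).exists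
  have hDbb : BddBelow D := ⟨T₁, fun u hu =>
    le_of_lt (sig_strictMono.lt_iff_lt.mp (lt_of_lt_of_le hT₁ (hclband hu).1))⟩
  have hDba : BddAbove D := ⟨T₂, fun u hu =>
    le_of_lt (sig_strictMono.lt_iff_lt.mp (lt_of_le_of_lt (hclband hu).2 hT₂))⟩
  have hF : IsOpen (M₂ᶜ) := hM₂c.isClosed.isOpen_compl
  obtain ⟨hsclo, hsM⟩ := sInf_entry hF (gamv τ₁) hDne hDbb
  obtain ⟨htclo, htM⟩ := sSup_exit hF (gamv τ₁) hDne hDba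
  set s : ℝ := sInf D with hs
  set t : ℝ := sSup D with ht
  have hsM₂ : gamv s ∈ M₂ := not_not.mp hsM
  have htM₂ : gamv t ∈ M₂ := not_not.mp htM
  have hst : s ≤ t := csInf_le_csSup hDne hDbb hDba
  have hout : ∀ u, u ∉ D → gamv u ∉ M₁ := fun u hu hmem => hu (subset_closure (hM₁U hmem))
  rcases eq_or_lt_of_le hst with heq | hlt
  · obtain ⟨τ, hτ⟩ := hM₁sep gamv connectsEnds_gamv
    by_cases hτD : τ ∈ D
    · have h1 : s ≤ τ := csInf_le hDbb hτD
      have h2 : τ ≤ t := le_csSup hDba hτD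
      have hτs : τ = s := le_antisymm (heq ▸ h2) h1
      rw [hτs] at hτ
      exact Set.disjoint_left.mp hdisj hτ hsM₂
    · exact hout τ hτD hτ
  · have hsW : gamv s ∈ M₁ᶜ := fun h => Set.disjoint_left.mp hdisj h hsM₂
    set W := connectedComponentIn M₁ᶜ (gamv s) with hW
    have hM₂W : M₂ ⊆ W :=
      hM₂conn.isPreconnected.subset_connectedComponentIn hsM₂
        (fun x hx h => Set.disjoint_left.mp hdisj h hx)
    have hWopen : IsOpen W := hM₁c.isClosed.isOpen_compl.connectedComponentIn
    have hWconn : IsConnected W :=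
      ⟨⟨_, mem_connectedComponentIn hsW⟩, isPreconnected_connectedComponentIn⟩
    have hWpc : IsPathConnected W := hWopen.isConnected_iff_isPathConnected.mp hWconn
    have hJ : JoinedIn W (gamv s) (gamv t) := hWpc.joinedIn _ (hM₂W hsM₂) _ (hM₂W htM₂)
    have hWM₁ : Disjoint W M₁ :=
      Set.disjoint_left.mpr fun z hz => connectedComponentIn_subset _ _ hz
    refine path_glue_avoid hWM₁ hlt hJ ?_ ?_ hM₁sep
    · intro u hu
      rcases eq_or_lt_of_le hu with rfl | hlt'
      · exact fun h => Set.disjoint_left.mp hdisj h hsM₂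
      · refine hout u (fun hmem => ?_)
        exact absurd (csInf_le hDbb hmem) (not_le.mpr hlt')
    · intro u hu
      refine hout u (fun hmem => ?_)
      exact absurd (le_csSup hDba hmem) (not_le.mpr hu)

/-- If `M₁, M₂` are disjoint separators in the open annulus `A`, then
either `M₁ ⊆ A_L(M₂)` or `M₁ ⊆ A_R(M₂)`; moreover `M₁ ⊆ A_L(M₂)` implies
`M₂ ⊆ A_R(M₁)`. -/
theorem ordering_of_disjoint_separators (M₁ M₂ L₁ R₁ L₂ R₂ : Set Ann)
    (h₁ : IsSeparator M₁) (h₂ : IsSeparator M₂) (hdisj : Disjoint M₁ M₂)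
    (hL₂ : IsLeftComponent M₂ L₂) (hR₂ : IsRightComponent M₂ R₂)
    (hL₁ : IsLeftComponent M₁ L₁) (hR₁ : IsRightComponent M₁ R₁) :
    (M₁ ⊆ L₂ ∨ M₁ ⊆ R₂) ∧ (M₁ ⊆ L₂ → M₂ ⊆ R₁) := by
  refine ⟨subset_left_or_right M₁ M₂ L₂ R₂ h₁ h₂ hdisj hL₂ hR₂, ?_⟩
  intro hM₁L₂
  rcases subset_left_or_right M₂ M₁ L₁ R₁ h₂ h₁ hdisj.symm hL₁ hR₁ with hM₂L₁ | hM₂R₁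
  swap
  · exact hM₂R₁
  exfalso
  obtain ⟨hM₁c, hM₁conn, hM₁sep⟩ := h₁
  obtain ⟨hM₂c, hM₂conn, hM₂sep⟩ := h₂
  -- maximum of y on M₂
  have hM₂ne : M₂.Nonempty := by
    obtain ⟨τ, hτ⟩ := hM₂sep gamv connectsEnds_gamv; exact ⟨_, hτ⟩
  obtain ⟨pmax, hpmaxM, hmax⟩ := hM₂c.exists_isMaxOn hM₂ne continuous_yc.continuousOn
  set b₂ : ℝ := yc pmax with hb₂def
  have hb₂0 : 0 < b₂ := pmax.2.2.1
  have hb₂1 : b₂ < 1 := pmax.2.2.2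
  have hhigh : {p : Ann | b₂ < yc p} ⊆ R₂ :=
    high_subset_right hR₂ (le_of_lt hb₂0) hb₂1 (fun p hp => hmax hp)
  have hLR₂ : Disjoint L₂ R₂ := left_right_disjoint ⟨hM₂c, hM₂conn, hM₂sep⟩ hL₂ hR₂
  -- L₂ lies below b₂
  have hbelow : L₂ ⊆ {p : Ann | yc p ≤ b₂} := by
    intro x hx
    by_contra h
    exact Set.disjoint_left.mp hLR₂ hx (hhigh (show b₂ < yc x from not_le.mp h))
  have hclbelow : closure L₂ ⊆ {p : Ann | yc p ≤ b₂} :=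
    closure_minimal hbelow (isClosed_le continuous_yc continuous_const)
  obtain ⟨⟨p₂, hp₂, hL₂e⟩, ε₂, hε₂, hε₂L⟩ := hL₂
  obtain ⟨⟨p₁, hp₁, hL₁e⟩, ε₁, hε₁, hε₁L⟩ := hL₁
  set D := {u : ℝ | gamv u ∈ closure (connectedComponentIn M₂ᶜ p₂)} with hD
  have hDeq : ∀ u, (u ∈ D ↔ gamv u ∈ closure L₂) := fun u => by rw [hD, hL₂e]; exact Iff.rfl
  have hDne : D.Nonempty := by
    obtain ⟨u₂, hu₂⟩ := (sig_tendsto_atBot.eventually_lt_const hε₂).exists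
    exact ⟨u₂, (hDeq u₂).mpr (subset_closure (hε₂L _ hu₂))⟩
  obtain ⟨T₂, hT₂⟩ := (sig_tendsto_atTop.eventually_const_lt hb₂1).exists
  have hDba : BddAbove D := ⟨T₂, fun u hu =>
    le_of_lt (sig_strictMono.lt_iff_lt.mp
      (lt_of_le_of_lt (hclbelow ((hDeq u).mp hu)) hT₂))⟩
  have hF : IsOpen (M₂ᶜ) := hM₂c.isClosed.isOpen_compl
  obtain ⟨htclo, htM⟩ := sSup_exit hF p₂ hDne hDba
  set t : ℝ := sSup D with ht
  have htM₂ : gamv t ∈ M₂ := not_not.mp htM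
  -- choose the starting time
  obtain ⟨u₀', hu₀'⟩ := (sig_tendsto_atBot.eventually_lt_const hε₁).exists
  set u₀ : ℝ := min u₀' (t - 1) with hu₀def
  have h0t : u₀ < t := lt_of_le_of_lt (min_le_right _ _) (by linarith)
  have hu₀ : sig u₀ < ε₁ := lt_of_le_of_lt (sig_strictMono.monotone (min_le_left _ _)) hu₀'
  -- L₁ is open and path-connected
  have hL₁open : IsOpen L₁ := by
    rw [hL₁e]; exact hM₁c.isClosed.isOpen_compl.connectedComponentIn
  have hL₁conn : IsConnected L₁ := by
    rw [hL₁e]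
    exact ⟨⟨p₁, mem_connectedComponentIn hp₁⟩, isPreconnected_connectedComponentIn⟩
  have hL₁pc : IsPathConnected L₁ := hL₁open.isConnected_iff_isPathConnected.mp hL₁conn
  have hL₁M₁ : Disjoint L₁ M₁ := by
    rw [hL₁e, Set.disjoint_left]
    exact fun z hz => connectedComponentIn_subset _ _ hz
  have hg0 : gamv u₀ ∈ L₁ := hε₁L _ hu₀
  have hgt : gamv t ∈ L₁ := hM₂L₁ htM₂
  have hJ : JoinedIn L₁ (gamv u₀) (gamv t) := hL₁pc.joinedIn _ hg0 _ hgt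
  refine path_glue_avoid hL₁M₁ h0t hJ ?_ ?_ hM₁sep
  · intro u hu
    have : sig u < ε₁ := lt_of_le_of_lt (sig_strictMono.monotone hu) hu₀
    exact fun hmem => Set.disjoint_left.mp hL₁M₁ (hε₁L _ this) hmem
  · intro u hu hmem
    have humem : u ∈ D := (hDeq u).mpr (subset_closure (hM₁L₂ hmem))
    exact absurd (le_csSup hDba humem) (not_le.mpr hu)
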